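/- The set S = {c ∈ ℝ : there exist an integer k ≥ 4 and a real a > 0 such that c is the unique global minimizer on (0, ∞) of g_{a,k}(x) = (a/x + 1/x^k)·e^x} is dense in the interval [1, ∞); that is, the closure of S contains [1, ∞). -/

import Mathlib

/-- `g a k x = (a/x + 1/x^k) * e^x`, the leading constant of the expected runtime. -/
noncomputable def hpjG (a : ℝ) (k : ℕ) (x : ℝ) : ℝ := (a / x + 1 / x ^ k) * Real.exp x

lemma hpj_key (c : ℝ) (hc : 1 < c) : ∃ k : ℕ, 4 ≤ k ∧ ∃ a : ℝ, 0 < a ∧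
    (∀ x : ℝ, 0 < x → hpjG a k c ≤ hpjG a k x) ∧
    (∀ x : ℝ, 0 < x → hpjG a k x = hpjG a k c → x = c) := by
  obtain ⟨n, hn⟩ := exists_nat_gt c
  set j : ℕ := n + 3 with hj
  have hc0 : (0 : ℝ) < c := by linarith
  have hck : c < ((j + 1 : ℕ) : ℝ) := by rw [hj]; push_cast; linarith
  have hc1 : (0 : ℝ) < c - 1 := by linarith
  have hden : (0 : ℝ) < (c - 1) * c ^ j := mul_pos hc1 (pow_pos hc0 j)
  set a : ℝ := (((j + 1 : ℕ) : ℝ) - c) / ((c - 1) * c ^ j) with ha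
  have ha0 : 0 < a := div_pos (by linarith) hden
  set φ : ℝ → ℝ := fun x => a * (x - 1) * x ^ j + x - ((j + 1 : ℕ) : ℝ) with hφ
  have hφc : φ c = 0 := by
    have h := div_mul_cancel₀ (((j + 1 : ℕ) : ℝ) - c) hden.ne'
    simp only [hφ, ha]
    nlinarith [h]
  have hmono : ∀ x y : ℝ, 1 ≤ x → x < y → φ x < φ y := by
    intro x y hx hxy
    have hx0 : (0 : ℝ) ≤ x := by linarith
    have hpj : x ^ j ≤ y ^ j := pow_le_pow_left₀ hx0 hxy.le j
    have hxjn : (0 : ℝ) ≤ x ^ j := pow_nonneg hx0 j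
    have h1 : (x - 1) * x ^ j ≤ (y - 1) * y ^ j := by nlinarith
    have h2 : a * ((x - 1) * x ^ j) ≤ a * ((y - 1) * y ^ j) :=
      mul_le_mul_of_nonneg_left h1 ha0.le
    simp only [hφ]
    nlinarith [h2]
  have hneg : ∀ x : ℝ, 0 < x → x ≤ 1 → φ x < 0 := by
    intro x hx hx1
    have hxj : (0 : ℝ) ≤ x ^ j := pow_nonneg hx.le j
    have h1 : a * (x - 1) * x ^ j ≤ 0 := by
      nlinarith [mul_nonneg (mul_nonneg ha0.le (by linarith : (0:ℝ) ≤ 1 - x)) hxj]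
    have hk4' : 4 ≤ j + 1 := by omega
    have hk4 : (4 : ℝ) ≤ ((j + 1 : ℕ) : ℝ) := by exact_mod_cast hk4'
    simp only [hφ]
    linarith
  have hsign_neg : ∀ x : ℝ, 0 < x → x < c → φ x < 0 := by
    intro x hx hxc
    rcases le_or_gt x 1 with h | h
    · exact hneg x hx h
    · have := hmono x c h.le hxc
      linarith [hφc]
  have hsign_pos : ∀ x : ℝ, c < x → 0 < φ x := by
    intro x hxc
    have := hmono c x hc.le hxc
    linarith [hφc]
  have hderiv : ∀ x : ℝ, 0 < x →
      HasDerivAt (hpjG a (j + 1)) (Real.exp x * (φ x / x ^ (j + 2))) x := by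
    intro x hx
    have hxne : x ≠ 0 := hx.ne'
    have h1 : HasDerivAt (fun y : ℝ => a / y) ((0 * x - a * 1) / x ^ 2) x :=
      (hasDerivAt_const x a).div (hasDerivAt_id x) hxne
    have h2 : HasDerivAt (fun y : ℝ => 1 / y ^ (j + 1))
        ((0 * x ^ (j + 1) - 1 * (((j + 1 : ℕ) : ℝ) * x ^ (j + 1 - 1))) / (x ^ (j + 1)) ^ 2) x :=
      (hasDerivAt_const x 1).div (hasDerivAt_pow (j + 1) x) (pow_ne_zero _ hxne)
    have h3 : HasDerivAt (hpjG a (j + 1))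
        (((0 * x - a * 1) / x ^ 2 + (0 * x ^ (j + 1) - 1 * (((j + 1 : ℕ) : ℝ) * x ^ (j + 1 - 1))) / (x ^ (j + 1)) ^ 2)
          * Real.exp x + (a / x + 1 / x ^ (j + 1)) * Real.exp x) x :=
      (h1.add h2).mul (Real.hasDerivAt_exp x)
    convert h3 using 1
    have hsub : j + 1 - 1 = j := rfl
    rw [hsub]
    simp only [hφ]
    push_cast
    field_simp
    ring
  have hcont1 : ContinuousOn (hpjG a (j + 1)) (Set.Ioc 0 c) := fun x hx =>
    (hderiv x hx.1).continuousAt.continuousWithinAt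
  have hcont2 : ContinuousOn (hpjG a (j + 1)) (Set.Ici c) := fun x hx =>
    (hderiv x (lt_of_lt_of_le hc0 hx)).continuousAt.continuousWithinAt
  have hanti : StrictAntiOn (hpjG a (j + 1)) (Set.Ioc 0 c) := by
    apply strictAntiOn_of_deriv_neg (convex_Ioc 0 c) hcont1
    intro x hx
    rw [interior_Ioc] at hx
    rw [(hderiv x hx.1).deriv]
    have hxp : (0 : ℝ) < x ^ (j + 2) := pow_pos hx.1 _
    exact mul_neg_of_pos_of_neg (Real.exp_pos x)
      (div_neg_of_neg_of_pos (hsign_neg x hx.1 hx.2) hxp)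
  have hmono2 : StrictMonoOn (hpjG a (j + 1)) (Set.Ici c) := by
    apply strictMonoOn_of_deriv_pos (convex_Ici c) hcont2
    intro x hx
    rw [interior_Ici] at hx
    rw [(hderiv x (lt_trans hc0 hx)).deriv]
    have hxp : (0 : ℝ) < x ^ (j + 2) := pow_pos (lt_trans hc0 hx) _
    exact mul_pos (Real.exp_pos x) (div_pos (hsign_pos x hx) hxp)
  have hmin : ∀ x : ℝ, 0 < x → x ≠ c → hpjG a (j + 1) c < hpjG a (j + 1) x := by
    intro x hx hne
    rcases lt_or_gt_of_ne hne with h | h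
    · exact hanti ⟨hx, h.le⟩ ⟨hc0, le_refl c⟩ h
    · exact hmono2 (le_refl c) h.le h
  refine ⟨j + 1, by simp [hj], a, ha0, ?_, ?_⟩
  · intro x hx
    rcases eq_or_ne x c with rfl | hne
    · exact le_refl _
    · exact (hmin x hx hne).le
  · intro x hx heq
    by_contra hne
    exact absurd heq (ne_of_gt (hmin x hx hne))

theorem stmt1 :
    Set.Ici (1 : ℝ) ⊆ closure {c : ℝ | ∃ k : ℕ, 4 ≤ k ∧ ∃ a : ℝ, 0 < a ∧
      (∀ x : ℝ, 0 < x → hpjG a k c ≤ hpjG a k x) ∧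
      (∀ x : ℝ, 0 < x → hpjG a k x = hpjG a k c → x = c)} := by
  rw [← closure_Ioi]
  exact closure_mono fun c hc => hpj_key c hc
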